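/- For all α, β ∈ 2^ℕ, if α and β are not E₀*-equivalent, then ψ(α) and ψ(β) are not joined by any path inside the Knaster continuum H, i.e. ¬ JoinedIn H (ψ α) (ψ β). -/

import Mathlib

/-- The Cantor space `2^ℕ`. -/
abbrev Cantor : Type := ℕ → Fin 2

/-- Eventual equality `E₀` on `2^ℕ`. -/
def E0 (α β : Cantor) : Prop := ∃ m : ℕ, ∀ n ≥ m, α n = β n

/-- Pointwise complement of a binary sequence. -/
def cmpl (α : Cantor) : Cantor := fun n => 1 - α n

/-- The relation `E₀*`: `α E₀* β` iff `α E₀ β` or `α E₀ β̄`. -/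
def E0star (α β : Cantor) : Prop := E0 α β ∨ E0 α (cmpl β)

/-- The relation `Fₙ`: agreement from coordinate `n` onwards. -/
def Frel (n : ℕ) (α β : Cantor) : Prop := ∀ i ≥ n, α i = β i

/-- The pieces `Hₖ` of the Knaster continuum. -/
def Hset (k : ℕ) : Set (ℝ × ℝ) :=
  if k = 0 then
    {p | 0 ≤ p.2 ∧ ∃ c ∈ cantorSet, (p.1 - 1/2)^2 + p.2^2 = (c - 1/2)^2}
  else
    {p | p.2 ≤ 0 ∧ ∃ c ∈ cantorSet ∩ Set.Icc ((2:ℝ)/3^k) (3/3^k),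
      (p.1 - 5/(2*3^k))^2 + p.2^2 = (c - 5/(2*3^k))^2}

/-- The Knaster continuum (buckethandle). -/
def knasterH : Set (ℝ × ℝ) := ⋃ k : ℕ, Hset k

/-- The map `ψ : 2^ℕ → ℝ²` sending `α` to the corresponding Cantor set point on the x-axis. -/
noncomputable def psi (α : Cantor) : ℝ × ℝ := (∑' i : ℕ, 2 * (α i : ℝ) / 3^(i+1), 0)

noncomputable def psiR (α : Cantor) : ℝ := ∑' i : ℕ, 2 * (α i : ℝ) / 3^(i+1)

def shiftn (n : ℕ) (α : Cantor) : Cantor := fun i => α (i + n)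

noncomputable def Pp (α : Cantor) (n : ℕ) : ℝ := ∑ i ∈ Finset.range n, 2 * (α i : ℝ) / 3^(i+1)

lemma fin2_cases (a : Fin 2) : a = 0 ∨ a = 1 := by
  fin_cases a <;> simp

lemma fin2_cast_nonneg (a : Fin 2) : (0:ℝ) ≤ (a : ℝ) := by
  rcases fin2_cases a with h | h <;> simp [h]

lemma fin2_cast_le_one (a : Fin 2) : (a : ℝ) ≤ 1 := by
  rcases fin2_cases a with h | h <;> simp [h]

lemma term_nonneg (α : Cantor) (i : ℕ) : (0:ℝ) ≤ 2 * (α i : ℝ) / 3^(i+1) := by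
  have := fin2_cast_nonneg (α i); positivity

lemma term_le (α : Cantor) (i : ℕ) : 2 * (α i : ℝ) / 3^(i+1) ≤ (2/3) * (1/3)^i := by
  have h := fin2_cast_le_one (α i)
  rw [div_eq_mul_inv]
  have h3 : ((3:ℝ)^(i+1))⁻¹ = (1/3) * (1/3)^i := by
    rw [pow_succ, one_div, inv_pow, mul_inv]
    ring
  rw [h3]
  have : (0:ℝ) ≤ (1/3)*(1/3:ℝ)^i := by positivity
  nlinarith [fin2_cast_nonneg (α i)]

lemma summable_geo : Summable (fun i : ℕ => (2/3:ℝ) * (1/3)^i) :=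
  (summable_geometric_of_lt_one (by norm_num) (by norm_num)).mul_left _

lemma psiR_summable (α : Cantor) : Summable (fun i => 2 * (α i : ℝ) / 3^(i+1)) :=
  Summable.of_nonneg_of_le (term_nonneg α) (term_le α) summable_geo

lemma psiR_nonneg (α : Cantor) : 0 ≤ psiR α :=
  tsum_nonneg (term_nonneg α)

lemma psiR_le_one (α : Cantor) : psiR α ≤ 1 := by
  have h := Summable.tsum_le_tsum (term_le α) (psiR_summable α) summable_geo
  have hg : ∑' i : ℕ, (2/3:ℝ) * (1/3)^i = 1 := by
    rw [tsum_mul_left, tsum_geometric_of_lt_one (by norm_num) (by norm_num)]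
    norm_num
  calc psiR α ≤ _ := h
    _ = 1 := hg

lemma psiR_split (α : Cantor) (n : ℕ) :
    psiR α = Pp α n + (1/3)^n * psiR (shiftn n α) := by
  have hs := psiR_summable α
  have h1 := Summable.sum_add_tsum_nat_add n hs
  rw [psiR, ← h1]
  congr 1
  rw [psiR, ← tsum_mul_left]
  congr 1
  ext i
  show 2 * (α (i + n) : ℝ) / 3^(i + n + 1) = (1/3:ℝ)^n * (2 * (α (i + n) : ℝ) / 3^(i+1))
  have e : (3:ℝ)^(i+n+1) = 3^n * 3^(i+1) := by ring
  rw [e]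
  have h3 : ((3:ℝ))^n ≠ 0 := by positivity
  have h1 : ((3:ℝ))^(i+1) ≠ 0 := by positivity
  rw [one_div, inv_pow]
  field_simp

def Mk (k : ℕ) (α : Cantor) : Cantor := fun i => if i < k then α i else 1 - α i

lemma cmpl_cast (a : Fin 2) : ((1 - a : Fin 2) : ℝ) = 1 - (a:ℝ) := by
  rcases fin2_cases a with h | h <;> simp [h]

lemma psiR_add_cmpl (α : Cantor) : psiR α + psiR (cmpl α) = 1 := by
  have h := Summable.tsum_add (psiR_summable α) (psiR_summable (cmpl α))
  have he : ∀ i : ℕ, 2 * (α i : ℝ) / 3^(i+1) + 2 * ((cmpl α) i : ℝ) / 3^(i+1)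
      = (2/3) * (1/3)^i := by
    intro i
    have : ((cmpl α i : Fin 2) : ℝ) = 1 - (α i : ℝ) := cmpl_cast (α i)
    rw [this]
    have h3 : ((3:ℝ))^(i+1) ≠ 0 := by positivity
    rw [pow_succ, one_div, inv_pow]
    field_simp
    ring
  rw [psiR, psiR, ← h]
  have hg : ∑' i : ℕ, ((2/3:ℝ) * (1/3)^i) = 1 := by
    rw [tsum_mul_left, tsum_geometric_of_lt_one (by norm_num) (by norm_num)]
    norm_num
  rw [← hg]
  exact tsum_congr he

lemma psiR_cmpl (α : Cantor) : psiR (cmpl α) = 1 - psiR α := by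
  have := psiR_add_cmpl α; linarith

lemma psiR_le_third {α : Cantor} (h : α 0 = 0) : psiR α ≤ 1/3 := by
  have hs := psiR_split α 1
  have : Pp α 1 = 0 := by simp [Pp, h]
  have h2 := psiR_le_one (shiftn 1 α)
  have h3 := psiR_nonneg (shiftn 1 α)
  rw [hs, this]
  norm_num
  linarith

lemma psiR_ge_two_third {α : Cantor} (h : α 0 = 1) : 2/3 ≤ psiR α := by
  have hs := psiR_split α 1
  have : Pp α 1 = 2/3 := by simp [Pp, h]
  have h3 := psiR_nonneg (shiftn 1 α)
  rw [hs, this]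
  nlinarith

lemma Pp_congr {α β : Cantor} (n : ℕ) (h : ∀ i < n, α i = β i) : Pp α n = Pp β n := by
  unfold Pp
  apply Finset.sum_congr rfl
  intro i hi
  rw [h i (Finset.mem_range.mp hi)]

lemma psiR_sub_Pp (α : Cantor) (n : ℕ) :
    psiR α - Pp α n ∈ Set.Icc (0:ℝ) ((1/3)^n) := by
  have hs := psiR_split α n
  have h2 := psiR_le_one (shiftn n α)
  have h3 := psiR_nonneg (shiftn n α)
  have hp : (0:ℝ) < (1/3)^n := by positivity
  constructor <;> nlinarith

lemma psiR_dist_le {α β : Cantor} (n : ℕ) (h : ∀ i < n, α i = β i) :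
    |psiR α - psiR β| ≤ (1/3)^n := by
  have h1 := psiR_sub_Pp α n
  have h2 := psiR_sub_Pp β n
  have h3 := Pp_congr n h
  simp only [Set.mem_Icc] at h1 h2
  rw [abs_le]
  constructor <;> nlinarith

lemma psiR_dist_ge {α β : Cantor} (n : ℕ) (h : ∀ i < n, α i = β i) (hn : α n ≠ β n) :
    (1/3)^(n+1) ≤ |psiR α - psiR β| := by
  have hs1 := psiR_split α n
  have hs2 := psiR_split β n
  have h3 := Pp_congr n h
  have key : (1:ℝ)/3 ≤ |psiR (shiftn n α) - psiR (shiftn n β)| := by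
    have ha0 : shiftn n α 0 = α n := by simp [shiftn]
    have hb0 : shiftn n β 0 = β n := by simp [shiftn]
    rcases fin2_cases (α n) with h0 | h0 <;> rcases fin2_cases (β n) with h1 | h1
    · exact absurd (h0.trans h1.symm) hn
    · have ka := psiR_le_third (ha0.trans h0)
      have kb := psiR_ge_two_third (hb0.trans h1)
      rw [abs_sub_comm, abs_of_nonneg (by linarith)]; linarith
    · have ka := psiR_ge_two_third (ha0.trans h0)
      have kb := psiR_le_third (hb0.trans h1)
      rw [abs_of_nonneg (by linarith)]; linarith
    · exact absurd (h0.trans h1.symm) hn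
  have he : psiR α - psiR β = (1/3)^n * (psiR (shiftn n α) - psiR (shiftn n β)) := by
    rw [hs1, hs2, h3]; ring
  rw [he, abs_mul, abs_of_nonneg (by positivity : (0:ℝ) ≤ (1/3)^n), pow_succ]
  have hp : (0:ℝ) < (1/3)^n := by positivity
  nlinarith

lemma psiR_injective : Function.Injective psiR := by
  intro α β hψ
  by_contra hne
  have hex : ∃ n, α n ≠ β n := by
    by_contra hh
    push_neg at hh
    exact hne (funext hh)
  classical
  let n := Nat.find hex
  have hn : α n ≠ β n := Nat.find_spec hex
  have hlt : ∀ i < n, α i = β i := by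
    intro i (hi : i < Nat.find hex)
    by_contra hc
    have := Nat.find_min hex hi
    exact this hc
  have := psiR_dist_ge n hlt hn
  rw [hψ, sub_self, abs_zero] at this
  have hp : (0:ℝ) < (1/3)^(n+1) := by positivity
  linarith

def Pref (k : ℕ) (α : Cantor) : Prop := (∀ i, i + 1 < k → α i = 0) ∧ α (k-1) = 1

lemma inv3 (k : ℕ) : ((1:ℝ)/3)^k = 1/3^k := by
  rw [div_pow, one_pow]

lemma Pp_pref {k : ℕ} {α : Cantor} (hk : 1 ≤ k) (h : Pref k α) : Pp α k = 2/3^k := by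
  unfold Pp
  rw [Finset.sum_eq_single_of_mem (k-1) (Finset.mem_range.mpr (by omega))]
  · rw [h.2]
    have : k - 1 + 1 = k := by omega
    rw [this]
    norm_num
  · intro i hi hne
    have : i + 1 < k := by
      have := Finset.mem_range.mp hi
      omega
    rw [h.1 i this]
    norm_num

lemma psiR_mem_Ik {k : ℕ} {α : Cantor} (hk : 1 ≤ k) (h : Pref k α) :
    psiR α ∈ Set.Icc ((2:ℝ)/3^k) (3/3^k) := by
  have hs := psiR_split α k
  have h2 := psiR_le_one (shiftn k α)
  have h3 := psiR_nonneg (shiftn k α)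
  have hp := Pp_pref hk h
  rw [hs, hp]
  have hi := inv3 k
  have hpos : (0:ℝ) < 1/3^k := by positivity
  have hsum : (2:ℝ)/3^k + 1/3^k = 3/3^k := by ring
  constructor <;> nlinarith

lemma all_zero_psiR {α : Cantor} (h : ∀ i, α i = 0) : psiR α = 0 := by
  have : ∀ i : ℕ, 2 * (α i : ℝ) / 3^(i+1) = 0 := by
    intro i; rw [h i]; norm_num
  rw [psiR, tsum_congr this, tsum_zero]

lemma pref_of_mem_Ik {k : ℕ} {α : Cantor} (hk : 1 ≤ k)
    (h : psiR α ∈ Set.Icc ((2:ℝ)/3^k) (3/3^k)) : Pref k α := by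
  classical
  have hpos : (0:ℝ) < 1/3^k := by positivity
  by_cases hex : ∃ i, α i = 1
  · let j := Nat.find hex
    have hj : α j = 1 := Nat.find_spec hex
    have hjlt : ∀ i < j, α i = 0 := by
      intro i hi
      have := Nat.find_min hex hi
      rcases fin2_cases (α i) with h0 | h0
      · exact h0
      · exact absurd h0 this
    have hpref : Pref (j+1) α := by
      constructor
      · intro i hi
        exact hjlt i (by omega)
      · simpa using hj
    -- cases on j+1 vs k
    rcases lt_trichotomy (j+1) k with hlt | heq | hgt
    · exfalso
      have hmem := psiR_mem_Ik (by omega) hpref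
      have h1 : (2:ℝ)/3^(j+1) ≤ psiR α := hmem.1
      have h2 : psiR α ≤ 3/3^k := h.2
      -- 2/3^(j+1) ≥ 2*3/3^k > 3/3^k
      have hk3 : (3:ℝ)^(j+1) * 3 ≤ 3^k := by
        calc (3:ℝ)^(j+1) * 3 = 3^(j+2) := by ring
        _ ≤ 3^k := by
          apply pow_le_pow_right₀ (by norm_num) (by omega)
      have p1 : (0:ℝ) < 3^(j+1) := by positivity
      have p2 : (0:ℝ) < 3^k := by positivity
      have h12 := le_trans h1 h2
      rw [div_le_div_iff₀ p1 p2] at h12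
      nlinarith
    · rw [← heq]; exact hpref
    · exfalso
      have hmem := psiR_mem_Ik (by omega : 1 ≤ j+1) hpref
      have h2 : psiR α ≤ 3/3^(j+1) := hmem.2
      have h1 : (2:ℝ)/3^k ≤ psiR α := h.1
      have hk3 : (3:ℝ)^k * 3 ≤ 3^(j+1) := by
        calc (3:ℝ)^k * 3 = 3^(k+1) := by ring
        _ ≤ 3^(j+1) := by apply pow_le_pow_right₀ (by norm_num) (by omega)
      have p1 : (0:ℝ) < 3^(j+1) := by positivity
      have p2 : (0:ℝ) < 3^k := by positivity
      have h12 := le_trans h1 h2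
      rw [div_le_div_iff₀ p2 p1] at h12
      nlinarith
  · exfalso
    push_neg at hex
    have hz : ∀ i, α i = 0 := by
      intro i
      rcases fin2_cases (α i) with h0 | h0
      · exact h0
      · exact absurd h0 (hex i)
    have := all_zero_psiR hz
    rw [this] at h
    have := h.1
    have p2 : (0:ℝ) < 3^k := by positivity
    rw [div_le_iff₀ p2] at this
    linarith

lemma pref_unique {k j : ℕ} {α : Cantor} (hk : 1 ≤ k) (hj : 1 ≤ j)
    (h1 : Pref k α) (h2 : Pref j α) : k = j := by
  by_contra hne
  rcases lt_or_gt_of_ne hne with h | h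
  · have := h2.1 (k-1) (by omega)
    rw [h1.2] at this
    exact absurd this (by decide)
  · have := h1.1 (j-1) (by omega)
    rw [h2.2] at this
    exact absurd this (by decide)

lemma cmpl_eq_Mk0 : cmpl = Mk 0 := by
  funext α i
  simp [cmpl, Mk]

lemma psiR_Mk (α : Cantor) (k : ℕ) :
    psiR α + psiR (Mk k α) = 2 * Pp α k + (1/3)^k := by
  have hs1 := psiR_split α k
  have hs2 := psiR_split (Mk k α) k
  have hP : Pp (Mk k α) k = Pp α k := by
    apply Pp_congr
    intro i hi
    simp [Mk, hi]
  have hsh : shiftn k (Mk k α) = cmpl (shiftn k α) := by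
    funext i
    simp only [shiftn, Mk, cmpl]
    rw [if_neg (by omega)]
  have hc : psiR (shiftn k α) + psiR (shiftn k (Mk k α)) = 1 := by
    rw [hsh]
    exact psiR_add_cmpl (shiftn k α)
  have hc2 : psiR (shiftn k (Mk k α)) = 1 - psiR (shiftn k α) := by linarith
  rw [hs1, hs2, hP, hc2]
  ring

lemma psiR_Mk_pref {k : ℕ} {α : Cantor} (hk : 1 ≤ k) (h : Pref k α) :
    psiR (Mk k α) = 5/3^k - psiR α := by
  have h1 := psiR_Mk α k
  have h2 := Pp_pref hk h
  have hi := inv3 k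
  rw [h2, hi] at h1
  have : 2 * ((2:ℝ)/3^k) + 1/3^k = 5/3^k := by ring
  linarith [h1]

lemma pref_Mk {k : ℕ} {α : Cantor} (hk : 1 ≤ k) (h : Pref k α) : Pref k (Mk k α) := by
  constructor
  · intro i hi
    simp only [Mk, if_pos (by omega : i < k)]
    exact h.1 i hi
  · simp only [Mk, if_pos (by omega : k - 1 < k)]
    exact h.2

lemma cmpl_cmpl (α : Cantor) : cmpl (cmpl α) = α := by
  funext i
  simp only [cmpl]
  rcases fin2_cases (α i) with h | h <;> simp [h]

lemma E0_refl (α : Cantor) : E0 α α := ⟨0, fun _ _ => rfl⟩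

lemma E0_symm {α β : Cantor} (h : E0 α β) : E0 β α := by
  obtain ⟨m, hm⟩ := h
  exact ⟨m, fun n hn => (hm n hn).symm⟩

lemma E0_trans {α β γ : Cantor} (h1 : E0 α β) (h2 : E0 β γ) : E0 α γ := by
  obtain ⟨m1, hm1⟩ := h1
  obtain ⟨m2, hm2⟩ := h2
  exact ⟨max m1 m2, fun n hn => (hm1 n (le_trans (le_max_left _ _) hn)).trans
    (hm2 n (le_trans (le_max_right _ _) hn))⟩

lemma E0_cmpl_congr {α β : Cantor} (h : E0 α β) : E0 (cmpl α) (cmpl β) := by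
  obtain ⟨m, hm⟩ := h
  exact ⟨m, fun n hn => by simp only [cmpl, hm n hn]⟩

lemma E0star_refl (α : Cantor) : E0star α α := Or.inl (E0_refl α)

lemma E0star_symm {α β : Cantor} (h : E0star α β) : E0star β α := by
  rcases h with h | h
  · exact Or.inl (E0_symm h)
  · right
    have := E0_cmpl_congr (E0_symm h)
    rwa [cmpl_cmpl] at this

lemma E0star_trans {α β γ : Cantor} (h1 : E0star α β) (h2 : E0star β γ) : E0star α γ := by
  rcases h1 with h1 | h1 <;> rcases h2 with h2 | h2
  · exact Or.inl (E0_trans h1 h2)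
  · exact Or.inr (E0_trans h1 h2)
  · exact Or.inr (E0_trans h1 (E0_cmpl_congr h2))
  · left
    refine E0_trans h1 ?_
    have := E0_cmpl_congr h2
    rwa [cmpl_cmpl] at this

lemma E0star_Mk (α : Cantor) (k : ℕ) : E0star (Mk k α) α := by
  right
  refine ⟨k, fun n hn => ?_⟩
  simp only [Mk, cmpl]
  rw [if_neg (by omega)]

lemma E0star_cmpl (α : Cantor) : E0star (cmpl α) α := by
  rw [cmpl_eq_Mk0]; exact E0star_Mk α 0

lemma preCantorSet_subset_Icc (n : ℕ) : preCantorSet n ⊆ Set.Icc (0:ℝ) 1 := by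
  induction n with
  | zero => simp [preCantorSet]
  | succ n ih =>
    rintro x (⟨y, hy, rfl⟩ | ⟨y, hy, rfl⟩)
    · obtain ⟨h0, h1⟩ := ih hy
      constructor <;> [linarith; linarith]
    · obtain ⟨h0, h1⟩ := ih hy
      constructor <;> [linarith; linarith]

lemma range_subset_cantorSet : ∀ (α : Cantor), psiR α ∈ cantorSet := by
  have key : ∀ n (α : Cantor), psiR α ∈ preCantorSet n := by
    intro n
    induction n with
    | zero =>
      intro α
      exact ⟨psiR_nonneg α, psiR_le_one α⟩
    | succ n ih =>
      intro α
      have hs := psiR_split α 1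
      rcases fin2_cases (α 0) with h0 | h0
      · left
        refine ⟨psiR (shiftn 1 α), ih _, ?_⟩
        have : Pp α 1 = 0 := by simp [Pp, h0]
        rw [hs, this]
        norm_num
        ring
      · right
        refine ⟨psiR (shiftn 1 α), ih _, ?_⟩
        have : Pp α 1 = 2/3 := by simp [Pp, h0]
        rw [hs, this]
        norm_num
        ring
  intro α
  exact Set.mem_iInter.mpr (fun n => key n α)

lemma cantor_scale_left {x : ℝ} (hx : x ∈ cantorSet) (h : x ≤ 1/2) : 3*x ∈ cantorSet := by
  apply Set.mem_iInter.mpr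
  intro n
  have hx1 := Set.mem_iInter.mp hx (n+1)
  rcases hx1 with ⟨y, hy, hxy⟩ | ⟨y, hy, hxy⟩
  · simp only at hxy
    have : 3*x = y := by rw [← hxy]; ring
    rwa [this]
  · exfalso
    have h0 := (preCantorSet_subset_Icc n hy).1
    simp only at hxy
    rw [← hxy] at h
    linarith

lemma cantor_scale_right {x : ℝ} (hx : x ∈ cantorSet) (h : 1/2 ≤ x) : 3*x - 2 ∈ cantorSet := by
  apply Set.mem_iInter.mpr
  intro n
  have hx1 := Set.mem_iInter.mp hx (n+1)
  rcases hx1 with ⟨y, hy, hxy⟩ | ⟨y, hy, hxy⟩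
  · exfalso
    have h1 := (preCantorSet_subset_Icc n hy).2
    simp only at hxy
    rw [← hxy] at h
    linarith
  · simp only at hxy
    have : 3*x - 2 = y := by rw [← hxy]; ring
    rwa [this]

noncomputable def TT (x : ℝ) : ℝ := if x ≤ 1/2 then 3*x else 3*x - 2

noncomputable def dig (x : ℝ) : Cantor := fun n => if TT^[n] x ≤ 1/2 then 0 else 1

lemma TT_iter_mem {x : ℝ} (hx : x ∈ cantorSet) (n : ℕ) : TT^[n] x ∈ cantorSet := by
  induction n with
  | zero => exact hx
  | succ n ih =>
    rw [Function.iterate_succ_apply']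
    unfold TT
    split_ifs with h
    · exact cantor_scale_left ih h
    · exact cantor_scale_right ih (by linarith)

lemma dig_partial {x : ℝ} (hx : x ∈ cantorSet) (n : ℕ) :
    x - Pp (dig x) n = (1/3)^n * TT^[n] x := by
  induction n with
  | zero => simp [Pp]
  | succ n ih =>
    have hP : Pp (dig x) (n+1) = Pp (dig x) n + 2 * ((dig x n : Fin 2) : ℝ)/3^(n+1) := by
      unfold Pp
      rw [Finset.sum_range_succ]
    rw [hP, Function.iterate_succ_apply']
    by_cases h : TT^[n] x ≤ 1/2
    · have hd : dig x n = 0 := by unfold dig; rw [if_pos h]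
      have hT : TT (TT^[n] x) = 3 * TT^[n] x := by rw [TT, if_pos h]
      rw [hd, hT]
      simp only [Fin.isValue, Fin.val_zero, Nat.cast_zero]
      linear_combination ih
    · have hd : dig x n = 1 := by unfold dig; rw [if_neg h]
      have hT : TT (TT^[n] x) = 3 * TT^[n] x - 2 := by rw [TT, if_neg h]
      rw [hd, hT]
      simp only [Fin.isValue, Fin.val_one, Nat.cast_one]
      have e : ((1:ℝ)/3)^(n+1)*(3*TT^[n] x - 2) = (1/3)^n * TT^[n] x - 2/3^(n+1) := by
        rw [inv3 (n+1), inv3 n]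
        have p1 : ((3:ℝ)^(n+1)) ≠ 0 := by positivity
        have p0 : ((3:ℝ)^n) ≠ 0 := by positivity
        have h3 : ((3:ℝ)^(n+1)) = 3^n * 3 := by ring
        rw [h3] at *
        field_simp
      rw [e]
      linarith [ih]

lemma cantorSet_eq_range : cantorSet = Set.range psiR := by
  ext x
  constructor
  · intro hx
    refine ⟨dig x, ?_⟩
    symm
    have hbound : ∀ n : ℕ, |x - psiR (dig x)| ≤ 2 * (1/3)^n := by
      intro n
      have h1 := dig_partial hx n
      have h2 := psiR_sub_Pp (dig x) n
      simp only [Set.mem_Icc] at h2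
      have h3 := preCantorSet_subset_Icc 0 (Set.mem_iInter.mp (TT_iter_mem hx n) 0)
      have hp : (0:ℝ) < (1/3)^n := by positivity
      rw [abs_le]
      constructor <;> nlinarith [h3.1, h3.2]
    by_contra hne
    have habs : 0 < |x - psiR (dig x)| := abs_pos.mpr (sub_ne_zero.mpr hne)
    obtain ⟨n, hn⟩ := exists_pow_lt_of_lt_one (div_pos habs (by norm_num : (0:ℝ) < 2)) (by norm_num : (1:ℝ)/3 < 1)
    have := hbound n
    rw [lt_div_iff₀ (by norm_num : (0:ℝ) < 2)] at hn
    linarith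
  · rintro ⟨α, rfl⟩
    exact range_subset_cantorSet α

lemma zero_seq_psiR : psiR (fun _ => 0) = 0 := all_zero_psiR (fun _ => rfl)

lemma cantor_repr {x : ℝ} (hx : x ∈ cantorSet) : ∃ α, psiR α = x := by
  rw [cantorSet_eq_range] at hx
  exact hx

lemma cantor_pref {x : ℝ} (hx : x ∈ cantorSet) (hne : x ≠ 0) :
    ∃ k, 1 ≤ k ∧ ∃ α, Pref k α ∧ psiR α = x := by
  obtain ⟨α, hα⟩ := cantor_repr hx
  classical
  have hex : ∃ i, α i = 1 := by
    by_contra hh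
    push_neg at hh
    have hz : ∀ i, α i = 0 := by
      intro i
      rcases fin2_cases (α i) with h0 | h0
      · exact h0
      · exact absurd h0 (hh i)
    exact hne (hα ▸ all_zero_psiR hz)
  let j := Nat.find hex
  refine ⟨j+1, by omega, α, ⟨?_, ?_⟩, hα⟩
  · intro i (hi : i + 1 < j + 1)
    have hmin := Nat.find_min hex (by omega : i < j)
    rcases fin2_cases (α i) with h0 | h0
    · exact h0
    · exact absurd h0 hmin
  · simpa using Nat.find_spec hex

lemma psiR_half_ne (β : Cantor) : psiR β ≠ 1/2 := by
  rcases fin2_cases (β 0) with h | h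
  · have := psiR_le_third h; intro hc; rw [hc] at this; norm_num at this
  · have := psiR_ge_two_third h; intro hc; rw [hc] at this; norm_num at this

lemma cantor_no_interval {x y : ℝ} (hxy : x < y) : ¬ (Set.Icc x y ⊆ cantorSet) := by
  intro hsub
  have hx : x ∈ cantorSet := hsub ⟨le_refl x, le_of_lt hxy⟩
  obtain ⟨α, hα⟩ := cantor_repr hx
  obtain ⟨m, hm⟩ := exists_pow_lt_of_lt_one
    (show (0:ℝ) < (y - x)/2 by linarith) (by norm_num : (1:ℝ)/3 < 1)
  have hm' : ((1:ℝ)/3)^(m+1) < (y - x)/2 :=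
    lt_of_le_of_lt (pow_le_pow_of_le_one (by norm_num) (by norm_num) (by omega)) hm
  have hr0 := psiR_nonneg (shiftn (m+1) α)
  have hr1 := psiR_le_one (shiftn (m+1) α)
  have hsplit := psiR_split α (m+1)
  have hpow : (0:ℝ) < (1/3)^(m+1) := by positivity
  have hzx1 : x < Pp α (m+1) + (3/2) * (1/3)^(m+1) := by
    rw [← hα, hsplit]; nlinarith
  have hzx2 : Pp α (m+1) + (3/2) * (1/3)^(m+1) - x ≤ (3/2)*(1/3)^(m+1) := by
    rw [← hα, hsplit]; nlinarith
  have hzy : Pp α (m+1) + (3/2) * (1/3)^(m+1) < y := by nlinarith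
  have hzC : Pp α (m+1) + (3/2) * (1/3)^(m+1) ∈ cantorSet :=
    hsub ⟨le_of_lt hzx1, le_of_lt hzy⟩
  obtain ⟨β, hβ⟩ := cantor_repr hzC
  have hagree : ∀ i, i < m → β i = α i := by
    intro i hi
    by_contra hne
    classical
    have hex : ∃ i, β i ≠ α i := ⟨i, hne⟩
    have hj : β (Nat.find hex) ≠ α (Nat.find hex) := Nat.find_spec hex
    have hjle : Nat.find hex ≤ i := by
      by_contra hc
      exact (Nat.find_min hex (by omega : i < Nat.find hex)) hne
    have hfirst : ∀ l, l < Nat.find hex → β l = α l := by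
      intro l hl
      by_contra hc
      exact (Nat.find_min hex hl) hc
    have hge := psiR_dist_ge (Nat.find hex) hfirst hj
    rw [hβ, hα] at hge
    have hle : |Pp α (m+1) + (3/2) * (1/3)^(m+1) - x| ≤ (3/2)*(1/3)^(m+1) := by
      rw [abs_of_pos (by linarith)]
      exact hzx2
    have hmono : ((1:ℝ)/3)^m ≤ (1/3)^(Nat.find hex + 1) := by
      apply pow_le_pow_of_le_one (by norm_num) (by norm_num)
      omega
    have hMp : ((1:ℝ)/3)^m = 3 * (1/3)^(m+1) := by
      rw [pow_succ]; ring
    nlinarith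
  have hsplitβ := psiR_split β m
  have hPeq : Pp β m = Pp α m := Pp_congr _ hagree
  have hpowinv : ((1:ℝ)/3)^m * 3^m = 1 := by
    rw [inv3]
    field_simp
  have hQ : psiR (shiftn m β) =
      (Pp α (m+1) + (3/2) * (1/3)^(m+1) - Pp α m) * 3^m := by
    have hβ' : Pp α (m+1) + (3/2) * (1/3)^(m+1)
        = Pp α m + (1/3)^m * psiR (shiftn m β) := by
      rw [← hβ, hsplitβ, hPeq]
    rw [hβ']
    have p : (0:ℝ) < 3^m := by positivity
    have expand : (Pp α m + (1/3)^m * psiR (shiftn m β) - Pp α m) * 3^m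
        = psiR (shiftn m β) * ((1/3)^m * 3^m) := by ring
    rw [expand, hpowinv, mul_one]
  have hPp : Pp α (m+1) = Pp α m + 2 * ((α m : Fin 2) : ℝ)/3^(m+1) := by
    unfold Pp
    rw [Finset.sum_range_succ]
  have hpows : ((1:ℝ)/3)^(m+1) * 3^m = 1/3 := by
    rw [pow_succ]
    calc ((1:ℝ)/3)^m * (1/3) * 3^m = ((1/3)^m * 3^m) * (1/3) := by ring
      _ = 1/3 := by rw [hpowinv]; ring
  have hpows2 : ((1:ℝ)/3^(m+1)) * 3^m = 1/3 := by
    rw [← inv3]; exact hpows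
  rcases fin2_cases (α m) with hd | hd
  · have hhalf : psiR (shiftn m β) = 1/2 := by
      rw [hQ, hPp, hd]
      simp only [Fin.isValue, Fin.val_zero, Nat.cast_zero]
      have expand : (Pp α m + 2 * (0:ℝ)/3^(m+1) + 3/2 * (1/3)^(m+1) - Pp α m) * 3^m
          = (3/2) * ((1/3)^(m+1) * 3^m) := by ring
      rw [expand, hpows]
      norm_num
    exact psiR_half_ne _ hhalf
  · have hval : psiR (shiftn m β) = 7/6 := by
      rw [hQ, hPp, hd]
      simp only [Fin.isValue, Fin.val_one, Nat.cast_one]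
      have expand : (Pp α m + 2 * (1:ℝ)/3^(m+1) + 3/2 * (1/3)^(m+1) - Pp α m) * 3^m
          = 2 * ((1/3^(m+1)) * 3^m) + (3/2) * ((1/3)^(m+1) * 3^m) := by ring
      rw [expand, hpows, hpows2]
      norm_num
    have := psiR_le_one (shiftn m β)
    rw [hval] at this
    norm_num at this

lemma cantor_preconnected_subsingleton {S : Set ℝ} (hS : S ⊆ cantorSet)
    (hconn : IsPreconnected S) : S.Subsingleton := by
  intro a ha b hb
  by_contra hne
  rcases lt_or_gt_of_ne hne with h | h
  · exact cantor_no_interval h ((hconn.ordConnected.out ha hb).trans hS)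
  · exact cantor_no_interval h ((hconn.ordConnected.out hb ha).trans hS)

lemma cantor_window {k : ℕ} (hk : 1 ≤ k) {x : ℝ} (hx : x ∈ cantorSet)
    (h1 : 1/3^k < x) (h2 : x < 6/3^k) : x ∈ Set.Icc ((2:ℝ)/3^k) (3/3^k) := by
  have hxne : x ≠ 0 := by
    have : (0:ℝ) < 1/3^k := by positivity
    intro hc; rw [hc] at h1; linarith
  obtain ⟨k', hk', α, hpref, hψ⟩ := cantor_pref hx hxne
  have hmem := psiR_mem_Ik hk' hpref
  rw [hψ] at hmem
  have hkk : k' = k := by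
    by_contra hne
    rcases lt_or_gt_of_ne hne with h | h
    · -- k' < k : x ≥ 2/3^k' ≥ 6/3^k
      have hb : (6:ℝ)/3^k ≤ 2/3^k' := by
        rw [div_le_div_iff₀ (by positivity) (by positivity)]
        calc (6:ℝ) * 3^k' = 2 * 3^(k'+1) := by ring
          _ ≤ 2 * 3^k := by
            have := pow_le_pow_right₀ (by norm_num : (1:ℝ) ≤ 3) (by omega : k'+1 ≤ k)
            linarith
      linarith [hmem.1]
    · -- k' > k : x ≤ 3/3^k' ≤ 1/3^k
      have hb : (3:ℝ)/3^k' ≤ 1/3^k := by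
        rw [div_le_div_iff₀ (by positivity) (by positivity)]
        have hp : (3:ℝ)^(k+1) ≤ 3^k' := pow_le_pow_right₀ (by norm_num) (by omega)
        have e : (3:ℝ)^(k+1) = 3 * 3^k := by ring
        linarith
      linarith [hmem.2]
  rw [← hkk]
  exact hmem

noncomputable def Kf (x : ℝ) : ℕ := sInf {k : ℕ | 1 ≤ k ∧ 2/3^k ≤ x}

noncomputable def phiC (x : ℝ) : ℝ := min x (5/3^(Kf x) - x)

lemma Kf_eq {k : ℕ} (hk : 1 ≤ k) {x : ℝ} (hx : x ∈ Set.Icc ((2:ℝ)/3^k) (3/3^k)) :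
    Kf x = k := by
  have hmem : k ∈ {k : ℕ | 1 ≤ k ∧ 2/3^k ≤ x} := ⟨hk, hx.1⟩
  apply le_antisymm (Nat.sInf_le hmem)
  apply le_csInf ⟨k, hmem⟩
  intro b hb
  by_contra hc
  push_neg at hc
  have hb2 : (2:ℝ)/3^b ≤ x := hb.2
  have hkey : (3:ℝ)/3^k < 2/3^b := by
    rw [div_lt_div_iff₀ (by positivity) (by positivity)]
    have hp : (3:ℝ)^(b+1) ≤ 3^k := pow_le_pow_right₀ (by norm_num) (by omega)
    have e : (3:ℝ)^(b+1) = 3 * 3^b := by ring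
    have hbp : (0:ℝ) < 3^b := by positivity
    nlinarith
  linarith [hx.2]

lemma phiC_zero : phiC 0 = 0 := by
  unfold phiC Kf
  have : {k : ℕ | 1 ≤ k ∧ 2/3^k ≤ (0:ℝ)} = ∅ := by
    ext k
    simp only [Set.mem_setOf_eq, Set.mem_empty_iff_false, iff_false, not_and]
    intro _
    push_neg
    positivity
  rw [this, Nat.sInf_empty]
  norm_num

lemma phiC_of_Ik {k : ℕ} (hk : 1 ≤ k) {x : ℝ} (hx : x ∈ Set.Icc ((2:ℝ)/3^k) (3/3^k)) :
    phiC x = min x (5/3^k - x) := by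
  unfold phiC
  rw [Kf_eq hk hx]

lemma phiC_le {x : ℝ} (hx : x ∈ cantorSet) : 0 ≤ phiC x ∧ phiC x ≤ x := by
  by_cases hne : x = 0
  · subst hne; rw [phiC_zero]; exact ⟨le_refl _, le_refl _⟩
  · obtain ⟨k, hk, α, hpref, hψ⟩ := cantor_pref hx hne
    have hmem := psiR_mem_Ik hk hpref
    rw [hψ] at hmem
    rw [phiC_of_Ik hk hmem]
    have h1 : (0:ℝ) < 2/3^k := by positivity
    have h5 : (2:ℝ)/3^k ≤ 5/3^k - x := by
      have : x ≤ 3/3^k := hmem.2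
      have e : (5:ℝ)/3^k - 3/3^k = 2/3^k := by ring
      linarith
    constructor
    · apply le_min <;> linarith [hmem.1]
    · exact min_le_left _ _

lemma phiC_pair {k : ℕ} (hk : 1 ≤ k) {α : Cantor} (h : Pref k α) :
    phiC (psiR α) = phiC (psiR (Mk k α)) := by
  have h1 := psiR_mem_Ik hk h
  have h2 := psiR_mem_Ik hk (pref_Mk hk h)
  rw [phiC_of_Ik hk h1, phiC_of_Ik hk h2, psiR_Mk_pref hk h]
  have : (5:ℝ)/3^k - (5/3^k - psiR α) = psiR α := by ring
  rw [this, min_comm]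

lemma phiC_repr {x : ℝ} (hx : x ∈ cantorSet) :
    ∃ α α', psiR α = x ∧ psiR α' = phiC x ∧ E0star α' α := by
  by_cases hne : x = 0
  · refine ⟨fun _ => 0, fun _ => 0, ?_, ?_, E0star_refl _⟩
    · rw [zero_seq_psiR, hne]
    · rw [zero_seq_psiR, hne, phiC_zero]
  · obtain ⟨k, hk, α, hpref, hψ⟩ := cantor_pref hx hne
    have hmem := psiR_mem_Ik hk hpref
    rw [hψ] at hmem
    have hφ : phiC x = min x (5/3^k - x) := phiC_of_Ik hk hmem
    rcases min_cases x (5/3^k - x) with ⟨he, _⟩ | ⟨he, _⟩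
    · exact ⟨α, α, hψ, by rw [hφ, he, hψ], E0star_refl _⟩
    · refine ⟨α, Mk k α, hψ, ?_, E0star_Mk α k⟩
      rw [hφ, he, ← hψ, psiR_Mk_pref hk hpref]

lemma phiC_mem {x : ℝ} (hx : x ∈ cantorSet) : phiC x ∈ cantorSet := by
  obtain ⟨_, α', _, hα', _⟩ := phiC_repr hx
  rw [← hα']
  exact range_subset_cantorSet α'

lemma phiC_decode {x y : ℝ} (hx : x ∈ cantorSet) (hy : y ∈ cantorSet)
    (h : phiC x = phiC y) :
    ∃ α β, psiR α = x ∧ psiR β = y ∧ E0star α β := by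
  obtain ⟨α, α', hα, hα', hstar⟩ := phiC_repr hx
  obtain ⟨β, β', hβ, hβ', hstar'⟩ := phiC_repr hy
  have : α' = β' := psiR_injective (by rw [hα', hβ', h])
  subst this
  exact ⟨α, β, hα, hβ, E0star_trans (E0star_symm hstar) hstar'⟩

lemma phiC_cont {x : ℝ} (hx : x ∈ cantorSet) {ε : ℝ} (hε : 0 < ε) :
    ∃ η > 0, ∀ y ∈ cantorSet, |y - x| < η → |phiC y - phiC x| < ε := by
  by_cases hne : x = 0
  · refine ⟨ε, hε, fun y hy hyx => ?_⟩
    subst hne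
    obtain ⟨h0, h1⟩ := phiC_le hy
    rw [phiC_zero, sub_zero] at *
    rw [abs_of_nonneg h0]
    have : |y| = y := abs_of_nonneg ((cantorSet_subset_unitInterval hy).1)
    rw [this] at hyx
    linarith
  · obtain ⟨k, hk, α, hpref, hψ⟩ := cantor_pref hx hne
    have hmem := psiR_mem_Ik hk hpref
    rw [hψ] at hmem
    have hd1 : (0:ℝ) < x - 1/3^k := by
      have : (1:ℝ)/3^k < 2/3^k := by
        rw [div_lt_div_iff₀ (by positivity) (by positivity)]; nlinarith [pow_pos (show (0:ℝ)<3 by norm_num) k]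
      linarith [hmem.1]
    have hd2 : (0:ℝ) < 6/3^k - x := by
      have : (3:ℝ)/3^k < 6/3^k := by
        rw [div_lt_div_iff₀ (by positivity) (by positivity)]; nlinarith [pow_pos (show (0:ℝ)<3 by norm_num) k]
      linarith [hmem.2]
    refine ⟨min (min (x - 1/3^k) (6/3^k - x)) ε, by positivity, fun y hy hyx => ?_⟩
    have hy1 : 1/3^k < y := by
      have h1 := abs_lt.mp hyx
      have := min_le_left (min (x - 1/3^k) (6/3^k - x)) ε
      have := min_le_left (x - 1/3^k) (6/3^k - x)
      linarith
    have hy2 : y < 6/3^k := by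
      have h1 := abs_lt.mp hyx
      have := min_le_left (min (x - 1/3^k) (6/3^k - x)) ε
      have := min_le_right (x - 1/3^k) (6/3^k - x)
      linarith
    have hymem := cantor_window hk hy hy1 hy2
    rw [phiC_of_Ik hk hymem, phiC_of_Ik hk hmem]
    have hlip := abs_min_sub_min_le_max y (5/3^k - y) x (5/3^k - x)
    have e1 : |5/3^k - y - (5/3^k - x)| = |y - x| := by
      rw [← abs_neg]; congr 1; ring
    rw [e1] at hlip
    have : max |y - x| |y - x| = |y - x| := max_self _
    rw [this] at hlip
    have := min_le_right (min (x - 1/3^k) (6/3^k - x)) ε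
    linarith

lemma cantor_compl {c : ℝ} (hc : c ∈ cantorSet) : 1 - c ∈ cantorSet := by
  obtain ⟨α, hα⟩ := cantor_repr hc
  rw [← hα, ← psiR_cmpl]
  exact range_subset_cantorSet _

lemma cantor_reflect {k : ℕ} (hk : 1 ≤ k) {c : ℝ} (hc : c ∈ cantorSet)
    (hI : c ∈ Set.Icc ((2:ℝ)/3^k) (3/3^k)) : 5/3^k - c ∈ cantorSet := by
  obtain ⟨α, hα⟩ := cantor_repr hc
  have hpref : Pref k α := pref_of_mem_Ik hk (by rw [hα]; exact hI)
  rw [← hα, ← psiR_Mk_pref hk hpref]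
  exact range_subset_cantorSet _

lemma sq_factor {x c h : ℝ} (heq : (x - h)^2 = (c - h)^2) : x = c ∨ x = 2*h - c := by
  have : (x - c) * (x + c - 2*h) = 0 := by nlinarith
  rcases mul_eq_zero.mp this with h1 | h1
  · left; linarith
  · right; linarith

lemma sq_subsingleton {h : ℝ} {S : Set ℝ} (hconn : IsPreconnected S)
    (hS : ∀ r ∈ S, ∃ c, r = (c - h)^2 ∧ h + |c - h| ∈ cantorSet) : S.Subsingleton := by
  have hcont : ContinuousOn (fun r => h + Real.sqrt r) S :=
    (continuous_const.add Real.continuous_sqrt).continuousOn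
  have himg : IsPreconnected ((fun r => h + Real.sqrt r) '' S) := hconn.image _ hcont
  have hsub : (fun r => h + Real.sqrt r) '' S ⊆ cantorSet := by
    rintro _ ⟨r, hr, rfl⟩
    obtain ⟨c, rfl, hmem⟩ := hS r hr
    show h + Real.sqrt ((c - h)^2) ∈ cantorSet
    rwa [Real.sqrt_sq_eq_abs]
  have hss := cantor_preconnected_subsingleton hsub himg
  intro r1 h1 r2 h2
  have he := hss (Set.mem_image_of_mem _ h1) (Set.mem_image_of_mem _ h2)
  have hs : Real.sqrt r1 = Real.sqrt r2 := by
    simpa using he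
  obtain ⟨c1, rfl, -⟩ := hS r1 h1
  obtain ⟨c2, rfl, -⟩ := hS r2 h2
  rw [Real.sqrt_sq_eq_abs, Real.sqrt_sq_eq_abs] at hs
  rw [← sq_abs, hs, sq_abs]

lemma mem_Hset0 {p : ℝ × ℝ} :
    p ∈ Hset 0 ↔ 0 ≤ p.2 ∧ ∃ c ∈ cantorSet, (p.1 - 1/2)^2 + p.2^2 = (c - 1/2)^2 := by
  simp [Hset]

lemma mem_HsetK {k : ℕ} (hk : k ≠ 0) {p : ℝ × ℝ} :
    p ∈ Hset k ↔ p.2 ≤ 0 ∧ ∃ c ∈ cantorSet ∩ Set.Icc ((2:ℝ)/3^k) (3/3^k),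
      (p.1 - 5/(2*3^k))^2 + p.2^2 = (c - 5/(2*3^k))^2 := by
  simp [Hset, hk]

lemma HsetK_x_mem {k : ℕ} (hk : k ≠ 0) {p : ℝ × ℝ} (hp : p ∈ Hset k) :
    p.1 ∈ Set.Icc ((2:ℝ)/3^k) (3/3^k) := by
  obtain ⟨hy, c, ⟨hcC, hcI⟩, heq⟩ := (mem_HsetK hk).mp hp
  have hc1 : |c - 5/(2*3^k)| ≤ 1/(2*3^k) := by
    rw [abs_le]
    obtain ⟨hl, hr⟩ := hcI
    have p3 : (0:ℝ) < 3^k := by positivity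
    have e1 : (5:ℝ)/(2*3^k) - 1/(2*3^k) = 2/3^k := by field_simp; ring
    have e2 : (5:ℝ)/(2*3^k) + 1/(2*3^k) = 3/3^k := by field_simp; ring
    constructor <;> [linarith; linarith]
  have hsq : (p.1 - 5/(2*3^k))^2 ≤ (1/(2*3^k))^2 := by
    have h2 : (c - 5/(2*3^k))^2 ≤ (1/(2*3^k))^2 := by
      rw [← sq_abs (c - 5/(2*3^k))]
      apply pow_le_pow_left₀ (abs_nonneg _) hc1
    nlinarith [sq_nonneg p.2]
  have habs := abs_le_of_sq_le_sq' hsq (by positivity)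
  have p3 : (0:ℝ) < 3^k := by positivity
  constructor
  · have e : (2:ℝ)/3^k = 5/(2*3^k) - 1/(2*3^k) := by field_simp; ring
    rw [e]; linarith [habs.1]
  · have e : (3:ℝ)/3^k = 5/(2*3^k) + 1/(2*3^k) := by field_simp; ring
    rw [e]; linarith [habs.2]

lemma axis_mem_cantor {p : ℝ × ℝ} (hp : p ∈ knasterH) (hy : p.2 = 0) :
    p.1 ∈ cantorSet := by
  obtain ⟨k, hk⟩ := Set.mem_iUnion.mp hp
  by_cases h0 : k = 0
  · subst h0
    obtain ⟨-, c, hcC, heq⟩ := mem_Hset0.mp hk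
    rw [hy] at heq
    simp only [ne_eq, OfNat.ofNat_ne_zero, not_false_eq_true, zero_pow, add_zero] at heq
    rcases sq_factor heq with rfl | he
    · exact hcC
    · rw [he]
      have : 2 * (1/2 : ℝ) - c = 1 - c := by ring
      rw [this]
      exact cantor_compl hcC
  · obtain ⟨-, c, ⟨hcC, hcI⟩, heq⟩ := (mem_HsetK h0).mp hk
    rw [hy] at heq
    simp only [ne_eq, OfNat.ofNat_ne_zero, not_false_eq_true, zero_pow, add_zero] at heq
    rcases sq_factor heq with rfl | he
    · exact hcC
    · rw [he]
      have : 2 * (5/(2*3^k) : ℝ) - c = 5/3^k - c := by field_simp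
      rw [this]
      exact cantor_reflect (by omega) hcC hcI

lemma const_on_endpoints {F : ℝ → ℝ} (hF : Continuous F) {a b v : ℝ} (hab : a < b)
    (h : ∀ u ∈ Set.Ioo a b, F u = v) : F a = v ∧ F b = v := by
  have hsub : Set.Icc a b ⊆ {u | F u = v} := by
    rw [← closure_Ioo (ne_of_lt hab)]
    exact closure_minimal h (isClosed_eq hF continuous_const)
  exact ⟨hsub ⟨le_refl a, le_of_lt hab⟩, hsub ⟨le_of_lt hab, le_refl b⟩⟩

lemma closed_of_Ioo {s : Set ℝ} (hs : IsClosed s) {a b : ℝ} (hab : a < b)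
    (h : Set.Ioo a b ⊆ s) : a ∈ s ∧ b ∈ s := by
  have hsub : Set.Icc a b ⊆ s := by
    rw [← closure_Ioo (ne_of_lt hab)]
    exact closure_minimal h hs
  exact ⟨hsub ⟨le_refl a, le_of_lt hab⟩, hsub ⟨le_of_lt hab, le_refl b⟩⟩

lemma sign_dichotomy {f : ℝ → ℝ × ℝ} (hf : Continuous f) {a b : ℝ}
    (hmid : ∀ u ∈ Set.Ioo a b, (f u).2 ≠ 0) :
    (∀ u ∈ Set.Ioo a b, 0 < (f u).2) ∨ (∀ u ∈ Set.Ioo a b, (f u).2 < 0) := by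
  by_contra hc
  push_neg at hc
  obtain ⟨⟨u, hu, hu2⟩, ⟨v, hv, hv2⟩⟩ := hc
  have hus : (f u).2 ≤ 0 := hu2
  have hvs : 0 ≤ (f v).2 := hv2
  have hcont : ContinuousOn (fun t => (f t).2) (Set.uIcc u v) :=
    (continuous_snd.comp hf).continuousOn
  have h0 : (0:ℝ) ∈ Set.uIcc ((f u).2) ((f v).2) := by
    rw [Set.mem_uIcc]; left; exact ⟨hus, hvs⟩
  obtain ⟨w, hw, hw0⟩ := intermediate_value_uIcc hcont h0
  have hwIoo : w ∈ Set.Ioo a b := Set.ordConnected_Ioo.uIcc_subset hu hv hw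
  exact hmid w hwIoo hw0

lemma between_not_Ik {L m : ℕ} (hL : 1 ≤ L) (hm : 1 ≤ m)
    (h : (3/2)/3^L ∈ Set.Icc ((2:ℝ)/3^m) (3/3^m)) : False := by
  obtain ⟨h1, h2⟩ := h
  have pL : (0:ℝ) < 3^L := by positivity
  have pm : (0:ℝ) < 3^m := by positivity
  rw [div_le_div_iff₀ pm pL] at h1
  rw [div_le_div_iff₀ pL pm] at h2
  have hLm : L < m := by
    by_contra hc
    push_neg at hc
    have := pow_le_pow_right₀ (show (1:ℝ) ≤ 3 by norm_num) hc
    nlinarith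
  have hp : (3:ℝ)^(L+1) ≤ 3^m := pow_le_pow_right₀ (by norm_num) (by omega)
  have e : (3:ℝ)^(L+1) = 3*3^L := by ring
  nlinarith

lemma lower_levels_contra {f : ℝ → ℝ × ℝ} {a b : ℝ}
    (hak : ∀ u ∈ Set.Ioo a b, ∃ k, k ≠ 0 ∧ f u ∈ Hset k)
    (hordX : Set.OrdConnected ((fun u => (f u).1) '' Set.Ioo a b))
    {u v : ℝ} (hu : u ∈ Set.Ioo a b) (hv : v ∈ Set.Ioo a b)
    {j m : ℕ} (hjm : j < m) (hj1 : 1 ≤ j)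
    (hxu : (f u).1 ∈ Set.Icc ((2:ℝ)/3^m) (3/3^m))
    (hxv : (f v).1 ∈ Set.Icc ((2:ℝ)/3^j) (3/3^j)) : False := by
  have pj : (0:ℝ) < 3^j := by positivity
  have pm : (0:ℝ) < 3^m := by positivity
  have hw1 : (f u).1 < (3/2)/3^j := by
    have h1 : (f u).1 ≤ 3/3^m := hxu.2
    have h2 : (3:ℝ)/3^m ≤ 1/3^j := by
      rw [div_le_div_iff₀ pm pj]
      have hp : (3:ℝ)^(j+1) ≤ 3^m := pow_le_pow_right₀ (by norm_num) (by omega)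
      have e : (3:ℝ)^(j+1) = 3*3^j := by ring
      nlinarith
    have h3 : (1:ℝ)/3^j < (3/2)/3^j := by
      rw [div_lt_div_iff₀ pj pj]; nlinarith
    linarith
  have hw2 : (3/2)/3^j < (f v).1 := by
    have h3 : (3/2:ℝ)/3^j < 2/3^j := by
      rw [div_lt_div_iff₀ pj pj]; nlinarith
    linarith [hxv.1]
  have hwX : (3/2)/3^j ∈ (fun u => (f u).1) '' Set.Ioo a b := by
    have := hordX.out (Set.mem_image_of_mem _ hu) (Set.mem_image_of_mem _ hv)
    exact this ⟨le_of_lt hw1, le_of_lt hw2⟩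
  obtain ⟨w, hwIoo, hwx⟩ := hwX
  obtain ⟨k, hkne, hk⟩ := hak w hwIoo
  have hmm := HsetK_x_mem hkne hk
  rw [show (f w).1 = (3/2)/3^j from hwx] at hmm
  exact between_not_Ik hj1 (by omega) hmm

lemma gap_move {f : ℝ → ℝ × ℝ} (hf : Continuous f) (hH : ∀ u, f u ∈ knasterH)
    {a b : ℝ} (hab : a < b) (hya : (f a).2 = 0) (hyb : (f b).2 = 0)
    (hmid : ∀ u ∈ Set.Ioo a b, (f u).2 ≠ 0) :
    ((f b).1 = (f a).1) ∨ ((f b).1 = 1 - (f a).1) ∨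
    (∃ k, 1 ≤ k ∧ (f a).1 ∈ Set.Icc ((2:ℝ)/3^k) (3/3^k) ∧
      (f b).1 ∈ Set.Icc ((2:ℝ)/3^k) (3/3^k) ∧ (f b).1 = 5/3^k - (f a).1) := by
  have hmidpt : (a+b)/2 ∈ Set.Ioo a b := ⟨by linarith, by linarith⟩
  rcases sign_dichotomy hf hmid with hpos | hneg
  · -- upper semicircle
    have hFc : Continuous (fun u => ((f u).1 - 1/2)^2 + ((f u).2)^2) := by
      apply Continuous.add
      · exact ((continuous_fst.comp hf).sub continuous_const).pow 2
      · exact (continuous_snd.comp hf).pow 2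
    have hmem0 : ∀ u ∈ Set.Ioo a b, f u ∈ Hset 0 := by
      intro u hu
      obtain ⟨k, hk⟩ := Set.mem_iUnion.mp (hH u)
      by_cases h0 : k = 0
      · subst h0; exact hk
      · exfalso
        have := ((mem_HsetK h0).mp hk).1
        linarith [hpos u hu]
    have himg : IsPreconnected ((fun u => ((f u).1 - 1/2)^2 + ((f u).2)^2) '' Set.Ioo a b) :=
      (isPreconnected_Ioo).image _ hFc.continuousOn
    have hss : ((fun u => ((f u).1 - 1/2)^2 + ((f u).2)^2) '' Set.Ioo a b).Subsingleton := by
      apply sq_subsingleton himg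
      rintro r ⟨u, hu, rfl⟩
      obtain ⟨-, c, hcC, heq⟩ := mem_Hset0.mp (hmem0 u hu)
      refine ⟨c, heq, ?_⟩
      rcases le_or_gt (1/2) c with hc | hc
      · rw [abs_of_nonneg (by linarith)]
        have e : 1/2 + (c - 1/2) = c := by ring
        rw [e]; exact hcC
      · rw [abs_of_neg (by linarith)]
        have e : 1/2 + -(c - 1/2) = 1 - c := by ring
        rw [e]; exact cantor_compl hcC
    have hconstIoo : ∀ u ∈ Set.Ioo a b,
        (fun u => ((f u).1 - 1/2)^2 + ((f u).2)^2) u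
          = (fun u => ((f u).1 - 1/2)^2 + ((f u).2)^2) ((a+b)/2) := fun u hu =>
      hss (Set.mem_image_of_mem _ hu) (Set.mem_image_of_mem _ hmidpt)
    obtain ⟨hFa, hFb⟩ := const_on_endpoints hFc hab hconstIoo
    have heq : ((f b).1 - 1/2)^2 = ((f a).1 - 1/2)^2 := by
      have hh := hFa.trans hFb.symm
      rw [hya, hyb] at hh
      nlinarith [hh]
    rcases sq_factor heq with h1 | h1
    · left; exact h1
    · right; left; rw [h1]; ring
  · -- lower semicircles
    obtain ⟨k0, hk0⟩ := Set.mem_iUnion.mp (hH ((a+b)/2))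
    have hk0ne : k0 ≠ 0 := by
      intro h0; subst h0
      have := (mem_Hset0.mp hk0).1
      linarith [hneg _ hmidpt]
    have hak : ∀ u ∈ Set.Ioo a b, ∃ k, k ≠ 0 ∧ f u ∈ Hset k := by
      intro u hu
      obtain ⟨k, hk⟩ := Set.mem_iUnion.mp (hH u)
      refine ⟨k, ?_, hk⟩
      intro h0; subst h0
      have := (mem_Hset0.mp hk).1
      linarith [hneg u hu]
    have himgX : IsPreconnected ((fun u => (f u).1) '' Set.Ioo a b) :=
      (isPreconnected_Ioo).image _ (continuous_fst.comp hf).continuousOn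
    have hordX := himgX.ordConnected
    have hx0 := HsetK_x_mem hk0ne hk0
    have hallk : ∀ u ∈ Set.Ioo a b, f u ∈ Hset k0 := by
      intro u hu
      obtain ⟨k, hkne, hk⟩ := hak u hu
      by_cases hkk : k = k0
      · rwa [hkk] at hk
      · exfalso
        have hxu := HsetK_x_mem hkne hk
        rcases lt_or_gt_of_ne hkk with hlt | hlt
        · exact lower_levels_contra hak hordX hmidpt hu hlt (by omega) hx0 hxu
        · exact lower_levels_contra hak hordX hu hmidpt hlt (by omega) hxu hx0
    -- now radius function constant
    have hFc : Continuous (fun u => ((f u).1 - 5/(2*3^k0))^2 + ((f u).2)^2) := by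
      apply Continuous.add
      · exact ((continuous_fst.comp hf).sub continuous_const).pow 2
      · exact (continuous_snd.comp hf).pow 2
    have himg : IsPreconnected
        ((fun u => ((f u).1 - 5/(2*3^k0))^2 + ((f u).2)^2) '' Set.Ioo a b) :=
      (isPreconnected_Ioo).image _ hFc.continuousOn
    have hss : ((fun u => ((f u).1 - 5/(2*3^k0))^2 + ((f u).2)^2) '' Set.Ioo a b).Subsingleton := by
      apply sq_subsingleton himg
      rintro r ⟨u, hu, rfl⟩
      obtain ⟨-, c, ⟨hcC, hcI⟩, heq⟩ := (mem_HsetK hk0ne).mp (hallk u hu)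
      refine ⟨c, heq, ?_⟩
      rcases le_or_gt (5/(2*3^k0)) c with hc | hc
      · rw [abs_of_nonneg (by linarith)]
        have e : 5/(2*3^k0) + (c - 5/(2*3^k0)) = c := by ring
        rw [e]; exact hcC
      · rw [abs_of_neg (by linarith)]
        have e : 5/(2*3^k0) + -(c - 5/(2*3^k0)) = 5/3^k0 - c := by
          field_simp; ring
        rw [e]; exact cantor_reflect (by omega) hcC hcI
    have hconstIoo : ∀ u ∈ Set.Ioo a b,
        (fun u => ((f u).1 - 5/(2*3^k0))^2 + ((f u).2)^2) u
          = (fun u => ((f u).1 - 5/(2*3^k0))^2 + ((f u).2)^2) ((a+b)/2) := fun u hu =>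
      hss (Set.mem_image_of_mem _ hu) (Set.mem_image_of_mem _ hmidpt)
    obtain ⟨hFa, hFb⟩ := const_on_endpoints hFc hab hconstIoo
    -- endpoints x in I_k0
    have hIcl : IsClosed {u : ℝ | (f u).1 ∈ Set.Icc ((2:ℝ)/3^k0) (3/3^k0)} :=
      IsClosed.preimage (continuous_fst.comp hf) isClosed_Icc
    have hIoosub : Set.Ioo a b ⊆ {u : ℝ | (f u).1 ∈ Set.Icc ((2:ℝ)/3^k0) (3/3^k0)} :=
      fun u hu => HsetK_x_mem hk0ne (hallk u hu)
    obtain ⟨hxa, hxb⟩ := closed_of_Ioo hIcl hab hIoosub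
    have heq : ((f b).1 - 5/(2*3^k0))^2 = ((f a).1 - 5/(2*3^k0))^2 := by
      have hh := hFa.trans hFb.symm
      rw [hya, hyb] at hh
      nlinarith [hh]
    rcases sq_factor heq with h1 | h1
    · left; exact h1
    · right; right
      refine ⟨k0, by omega, hxa, hxb, ?_⟩
      rw [h1]
      field_simp

def Zset (f : ℝ → ℝ × ℝ) : Set ℝ := Set.Icc 0 1 ∩ {u | (f u).2 = 0}

lemma Zset_closed {f : ℝ → ℝ × ℝ} (hf : Continuous f) : IsClosed (Zset f) :=
  isClosed_Icc.inter (isClosed_eq (continuous_snd.comp hf) continuous_const)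

lemma cantor_third_gap {x : ℝ} (hx : x ∈ cantorSet) : x ≤ 1/3 ∨ 2/3 ≤ x := by
  obtain ⟨α, hα⟩ := cantor_repr hx
  rcases fin2_cases (α 0) with h | h
  · left; rw [← hα]; exact psiR_le_third h
  · right; rw [← hα]; exact psiR_ge_two_third h

lemma gap_phi {f : ℝ → ℝ × ℝ} (hf : Continuous f) (hH : ∀ u, f u ∈ knasterH)
    {a b : ℝ} (hab : a < b) (haZ : a ∈ Zset f) (hbZ : b ∈ Zset f)
    (hgap : ∀ u ∈ Set.Ioo a b, u ∉ Zset f)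
    (hosc : |(f a).1 - (f b).1| < 1/3) :
    phiC ((f a).1) = phiC ((f b).1) := by
  have hya : (f a).2 = 0 := haZ.2
  have hyb : (f b).2 = 0 := hbZ.2
  have hmid : ∀ u ∈ Set.Ioo a b, (f u).2 ≠ 0 := by
    intro u hu
    have hu01 : u ∈ Set.Icc (0:ℝ) 1 := by
      obtain ⟨ha0, _⟩ := haZ.1
      obtain ⟨_, hb1⟩ := hbZ.1
      exact ⟨le_trans ha0 (le_of_lt hu.1), le_trans (le_of_lt hu.2) hb1⟩
    intro hc
    exact hgap u hu ⟨hu01, hc⟩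
  have haC : (f a).1 ∈ cantorSet := axis_mem_cantor (hH a) hya
  rcases gap_move hf hH hab hya hyb hmid with h1 | h1 | ⟨k, hk, haI, hbI, he⟩
  · rw [h1]
  · exfalso
    have := cantor_third_gap haC
    rw [h1] at hosc
    rcases this with h | h
    · rw [abs_of_nonpos (by linarith)] at hosc; linarith
    · rw [abs_of_nonneg (by linarith)] at hosc; linarith
  · obtain ⟨α, hα⟩ := cantor_repr haC
    have hpref : Pref k α := pref_of_mem_Ik hk (by rw [hα]; exact haI)
    have hb : (f b).1 = psiR (Mk k α) := by
      rw [he, ← hα, psiR_Mk_pref hk hpref]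
    rw [← hα, hb]
    exact phiC_pair hk hpref

lemma compact_ZIcc {f : ℝ → ℝ × ℝ} (hf : Continuous f) (t u : ℝ) :
    IsCompact (Zset f ∩ Set.Icc t u) := by
  apply IsCompact.of_isClosed_subset isCompact_Icc
    ((Zset_closed hf).inter isClosed_Icc) Set.inter_subset_right

lemma sSup_ZIcc_mem {f : ℝ → ℝ × ℝ} (hf : Continuous f) {t u : ℝ}
    (ht : t ∈ Zset f) (htu : t ≤ u) :
    sSup (Zset f ∩ Set.Icc t u) ∈ Zset f ∩ Set.Icc t u :=
  (compact_ZIcc hf t u).sSup_mem ⟨t, ht, le_refl t, htu⟩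

lemma sInf_ZIcc_mem {f : ℝ → ℝ × ℝ} (hf : Continuous f) {v t' : ℝ}
    (ht' : t' ∈ Zset f) (hvt' : v ≤ t') :
    sInf (Zset f ∩ Set.Icc v t') ∈ Zset f ∩ Set.Icc v t' :=
  (compact_ZIcc hf v t').sInf_mem ⟨t', ht', hvt', le_refl t'⟩

lemma window {f : ℝ → ℝ × ℝ} (hf : Continuous f) (hH : ∀ u, f u ∈ knasterH)
    {t t' : ℝ} (htZ : t ∈ Zset f) (ht'Z : t' ∈ Zset f) (htt' : t ≤ t')
    (hosc : ∀ s ∈ Zset f ∩ Set.Icc t t', ∀ s' ∈ Zset f ∩ Set.Icc t t',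
      |(f s).1 - (f s').1| < 1/3) :
    phiC ((f t).1) = phiC ((f t').1) := by
  set Z := Zset f with hZdef
  have hbdd : ∀ u : ℝ, BddAbove (Z ∩ Set.Icc t u) :=
    fun u => BddAbove.mono Set.inter_subset_right bddAbove_Icc
  have hbddB : ∀ v : ℝ, BddBelow (Z ∩ Set.Icc v t') :=
    fun v => BddBelow.mono Set.inter_subset_right bddBelow_Icc
  have hA_id : ∀ u, u ∈ Z → t ≤ u → sSup (Z ∩ Set.Icc t u) = u := by
    intro u huZ htu
    apply le_antisymm
    · exact csSup_le ⟨u, huZ, htu, le_refl u⟩ (fun z hz => hz.2.2)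
    · exact le_csSup (hbdd u) ⟨huZ, htu, le_refl u⟩
  set g : ℝ → ℝ := fun u => phiC ((f (sSup (Z ∩ Set.Icc t u))).1) with hgdef
  have hcont : ContinuousOn g (Set.Icc t t') := by
    intro u₀ hu₀
    rw [Metric.continuousWithinAt_iff]
    intro ε hε
    by_cases hu₀Z : u₀ ∈ Z
    · -- at a Z point
      have hx₀C : (f u₀).1 ∈ cantorSet := axis_mem_cantor (hH u₀) hu₀Z.2
      obtain ⟨η, hη, hηp⟩ := phiC_cont hx₀C hε
      have hxc : Continuous fun s => (f s).1 := continuous_fst.comp hf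
      obtain ⟨δ, hδ, hδp⟩ := Metric.continuous_iff.mp hxc u₀ η hη
      have hAu₀ : sSup (Z ∩ Set.Icc t u₀) = u₀ := hA_id u₀ hu₀Z hu₀.1
      refine ⟨δ, hδ, ?_⟩
      intro v hv hvd
      have hgu₀ : g u₀ = phiC ((f u₀).1) := by rw [hgdef]; simp only; rw [hAu₀]
      rcases le_or_gt u₀ v with hcase | hcase
      · -- v ≥ u₀ : A v ∈ [u₀, v]
        have hAv := sSup_ZIcc_mem hf htZ hv.1
        rw [← hZdef] at hAv
        have h1 : u₀ ≤ sSup (Z ∩ Set.Icc t v) := le_csSup (hbdd v) ⟨hu₀Z, hu₀.1, hcase⟩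
        have h2 : sSup (Z ∩ Set.Icc t v) ≤ v := hAv.2.2
        have hd : dist (sSup (Z ∩ Set.Icc t v)) u₀ < δ := by
          rw [Real.dist_eq] at hvd ⊢
          rw [abs_lt] at hvd ⊢
          constructor <;> [linarith [hvd.1]; linarith [hvd.2]]
        have hx := hδp _ hd
        have hAvC : (f (sSup (Z ∩ Set.Icc t v))).1 ∈ cantorSet :=
          axis_mem_cantor (hH _) hAv.1.2
        rw [Real.dist_eq] at hx
        have := hηp _ hAvC hx
        rw [hgu₀, hgdef]
        simp only
        rw [Real.dist_eq]
        exact this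
      · by_cases hvZ : v ∈ Z
        · -- v ∈ Z : A v = v
          have hAv : sSup (Z ∩ Set.Icc t v) = v := hA_id v hvZ hv.1
          have hvC : (f v).1 ∈ cantorSet := axis_mem_cantor (hH v) hvZ.2
          have hx := hδp v hvd
          rw [Real.dist_eq] at hx
          have := hηp _ hvC hx
          rw [hgu₀, hgdef]
          simp only
          rw [hAv, Real.dist_eq]
          exact this
        · -- v < u₀, v ∉ Z : bridge over the gap
          have hAv := sSup_ZIcc_mem hf htZ hv.1
          rw [← hZdef] at hAv
          have hvt' : v ≤ t' := hv.2
          have hc₀ := sInf_ZIcc_mem hf ht'Z hvt'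
          rw [← hZdef] at hc₀
          have ha₀v : sSup (Z ∩ Set.Icc t v) < v :=
            lt_of_le_of_ne hAv.2.2 (fun h => hvZ (h ▸ hAv.1))
          have hvc₀ : v < sInf (Z ∩ Set.Icc v t') :=
            lt_of_le_of_ne hc₀.2.1 (fun h => hvZ (h ▸ hc₀.1))
          have hc₀u₀ : sInf (Z ∩ Set.Icc v t') ≤ u₀ :=
            csInf_le (hbddB v) ⟨hu₀Z, le_of_lt hcase, hu₀.2⟩
          have hgapempty : ∀ u ∈ Set.Ioo (sSup (Z ∩ Set.Icc t v)) (sInf (Z ∩ Set.Icc v t')),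
              u ∉ Z := by
            intro u hu huZ
            rcases le_or_gt u v with huv | huv
            · have : u ≤ sSup (Z ∩ Set.Icc t v) :=
                le_csSup (hbdd v) ⟨huZ, le_trans hAv.2.1 (le_of_lt hu.1), huv⟩
              linarith [hu.1]
            · have : sInf (Z ∩ Set.Icc v t') ≤ u :=
                csInf_le (hbddB v) ⟨huZ, le_of_lt huv, le_trans (le_of_lt hu.2) hc₀.2.2⟩
              linarith [hu.2]
          have hmem1 : sSup (Z ∩ Set.Icc t v) ∈ Z ∩ Set.Icc t t' :=
            ⟨hAv.1, hAv.2.1, le_trans hAv.2.2 hvt'⟩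
          have hmem2 : sInf (Z ∩ Set.Icc v t') ∈ Z ∩ Set.Icc t t' :=
            ⟨hc₀.1, le_trans hv.1 hc₀.2.1, hc₀.2.2⟩
          have hphieq := gap_phi hf hH (lt_trans ha₀v hvc₀) hAv.1 hc₀.1 hgapempty
            (hosc _ hmem1 _ hmem2)
          have hdc : dist (sInf (Z ∩ Set.Icc v t')) u₀ < δ := by
            rw [Real.dist_eq] at hvd ⊢
            rw [abs_lt] at hvd ⊢
            constructor <;> [linarith [hvd.1, hvc₀, hc₀u₀]; linarith [hvd.2, hc₀u₀]]
          have hx := hδp _ hdc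
          rw [Real.dist_eq] at hx
          have hc₀C : (f (sInf (Z ∩ Set.Icc v t'))).1 ∈ cantorSet :=
            axis_mem_cantor (hH _) hc₀.1.2
          have := hηp _ hc₀C hx
          rw [hgu₀, hgdef]
          simp only
          rw [Real.dist_eq, hphieq]
          exact this
    · -- u₀ ∉ Z : locally constant
      have ha₀ := sSup_ZIcc_mem hf htZ hu₀.1
      rw [← hZdef] at ha₀
      have hb₀ := sInf_ZIcc_mem hf ht'Z hu₀.2
      rw [← hZdef] at hb₀
      have ha₀u₀ : sSup (Z ∩ Set.Icc t u₀) < u₀ :=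
        lt_of_le_of_ne ha₀.2.2 (fun h => hu₀Z (h ▸ ha₀.1))
      have hu₀b₀ : u₀ < sInf (Z ∩ Set.Icc u₀ t') :=
        lt_of_le_of_ne hb₀.2.1 (fun h => hu₀Z (h ▸ hb₀.1))
      refine ⟨min (u₀ - sSup (Z ∩ Set.Icc t u₀)) (sInf (Z ∩ Set.Icc u₀ t') - u₀),
        by simp [ha₀u₀, hu₀b₀], ?_⟩
      intro v hv hvd
      rw [Real.dist_eq, abs_lt] at hvd
      obtain ⟨hvd1, hvd2⟩ := hvd
      rw [lt_min_iff] at hvd2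
      rw [neg_lt, neg_sub, lt_min_iff] at hvd1
      have hva : sSup (Z ∩ Set.Icc t u₀) < v := by linarith [hvd1.1]
      have hvb : v < sInf (Z ∩ Set.Icc u₀ t') := by linarith [hvd2.2]
      have hAv_eq : sSup (Z ∩ Set.Icc t v) = sSup (Z ∩ Set.Icc t u₀) := by
        apply le_antisymm
        · apply csSup_le
          · exact ⟨sSup (Z ∩ Set.Icc t u₀), ha₀.1, ha₀.2.1, le_of_lt hva⟩
          intro z hz
          by_contra hc
          push_neg at hc
          rcases le_or_gt z u₀ with hzu | hzu
          · have : z ≤ sSup (Z ∩ Set.Icc t u₀) :=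
              le_csSup (hbdd u₀) ⟨hz.1, hz.2.1, hzu⟩
            linarith
          · have : sInf (Z ∩ Set.Icc u₀ t') ≤ z :=
              csInf_le (hbddB u₀) ⟨hz.1, le_of_lt hzu, le_trans hz.2.2 hv.2⟩
            linarith [hz.2.2]
        · exact le_csSup (hbdd v) ⟨ha₀.1, ha₀.2.1, le_of_lt hva⟩
      rw [hgdef]
      simp only
      rw [hAv_eq, Real.dist_eq, sub_self, abs_zero]
      exact hε
  -- conclude by total disconnectedness
  have himg : IsPreconnected (g '' Set.Icc t t') :=
    (isPreconnected_Icc).image g hcont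
  have hsub : g '' Set.Icc t t' ⊆ cantorSet := by
    rintro _ ⟨u, hu, rfl⟩
    have hAu := sSup_ZIcc_mem hf htZ hu.1
    rw [← hZdef] at hAu
    exact phiC_mem (axis_mem_cantor (hH _) hAu.1.2)
  have hss := cantor_preconnected_subsingleton hsub himg
  have hgt : g t = g t' :=
    hss (Set.mem_image_of_mem g ⟨le_refl t, htt'⟩)
        (Set.mem_image_of_mem g ⟨htt', le_refl t'⟩)
  rw [hgdef] at hgt
  simp only at hgt
  rwa [hA_id t htZ (le_refl t), hA_id t' ht'Z htt'] at hgt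

def ER (x y : ℝ) : Prop := ∃ a b : Cantor, psiR a = x ∧ psiR b = y ∧ E0star a b

lemma ER_refl {x : ℝ} (hx : x ∈ cantorSet) : ER x x := by
  obtain ⟨α, hα⟩ := cantor_repr hx
  exact ⟨α, α, hα, hα, E0star_refl α⟩

lemma ER_symm {x y : ℝ} (h : ER x y) : ER y x := by
  obtain ⟨a, b, ha, hb, hab⟩ := h
  exact ⟨b, a, hb, ha, E0star_symm hab⟩

lemma ER_trans {x y z : ℝ} (h1 : ER x y) (h2 : ER y z) : ER x z := by
  obtain ⟨a, b, ha, hb, hab⟩ := h1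
  obtain ⟨b', c, hb', hc, hbc⟩ := h2
  have : b = b' := psiR_injective (hb.trans hb'.symm)
  subst this
  exact ⟨a, c, ha, hc, E0star_trans hab hbc⟩

lemma gap_ER {f : ℝ → ℝ × ℝ} (hf : Continuous f) (hH : ∀ u, f u ∈ knasterH)
    {a b : ℝ} (hab : a < b) (haZ : a ∈ Zset f) (hbZ : b ∈ Zset f)
    (hgap : ∀ u ∈ Set.Ioo a b, u ∉ Zset f) :
    ER ((f a).1) ((f b).1) := by
  have hya : (f a).2 = 0 := haZ.2
  have hyb : (f b).2 = 0 := hbZ.2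
  have hmid : ∀ u ∈ Set.Ioo a b, (f u).2 ≠ 0 := by
    intro u hu
    have hu01 : u ∈ Set.Icc (0:ℝ) 1 :=
      ⟨le_trans haZ.1.1 (le_of_lt hu.1), le_trans (le_of_lt hu.2) hbZ.1.2⟩
    intro hc
    exact hgap u hu ⟨hu01, hc⟩
  have haC : (f a).1 ∈ cantorSet := axis_mem_cantor (hH a) hya
  obtain ⟨α, hα⟩ := cantor_repr haC
  rcases gap_move hf hH hab hya hyb hmid with h1 | h1 | ⟨k, hk, haI, hbI, he⟩
  · rw [h1]; exact ER_refl haC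
  · refine ⟨α, cmpl α, hα, ?_, E0star_symm (E0star_cmpl α)⟩
    rw [psiR_cmpl, hα, h1]
  · have hpref : Pref k α := pref_of_mem_Ik hk (by rw [hα]; exact haI)
    refine ⟨α, Mk k α, hα, ?_, E0star_symm (E0star_Mk α k)⟩
    rw [psiR_Mk_pref hk hpref, hα, he]

lemma window_ER {f : ℝ → ℝ × ℝ} (hf : Continuous f) (hH : ∀ u, f u ∈ knasterH)
    {t t' : ℝ} (htZ : t ∈ Zset f) (ht'Z : t' ∈ Zset f) (htt' : t ≤ t')
    (hosc : ∀ s ∈ Zset f ∩ Set.Icc t t', ∀ s' ∈ Zset f ∩ Set.Icc t t',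
      |(f s).1 - (f s').1| < 1/3) :
    ER ((f t).1) ((f t').1) := by
  have h := window hf hH htZ ht'Z htt' hosc
  obtain ⟨α, β, hα, hβ, hstar⟩ := phiC_decode
    (axis_mem_cantor (hH t) htZ.2) (axis_mem_cantor (hH t') ht'Z.2) h
  exact ⟨α, β, hα, hβ, hstar⟩

lemma chain_step {f : ℝ → ℝ × ℝ} (hf : Continuous f) (hH : ∀ u, f u ∈ knasterH)
    (h0 : (0:ℝ) ∈ Zset f) (h1 : (1:ℝ) ∈ Zset f)
    {δ : ℝ} (hδ : 0 < δ)
    (hunif : ∀ s ∈ Set.Icc (0:ℝ) 1, ∀ s' ∈ Set.Icc (0:ℝ) 1,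
      |s - s'| < δ → |(f s).1 - (f s').1| < 1/3)
    {u u' : ℝ} (hu : u ∈ Set.Icc (0:ℝ) 1) (hu' : u' ∈ Set.Icc (0:ℝ) 1)
    (huu' : u ≤ u') (hd : u' - u < δ) :
    ER ((f (sSup (Zset f ∩ Set.Icc 0 u))).1) ((f (sSup (Zset f ∩ Set.Icc 0 u'))).1) := by
  have hbdd : ∀ w : ℝ, BddAbove (Zset f ∩ Set.Icc 0 w) :=
    fun w => BddAbove.mono Set.inter_subset_right bddAbove_Icc
  have hbddB : ∀ w : ℝ, BddBelow (Zset f ∩ Set.Icc w 1) :=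
    fun w => BddBelow.mono Set.inter_subset_right bddBelow_Icc
  have hz := sSup_ZIcc_mem hf h0 hu.1
  have hz' := sSup_ZIcc_mem hf h0 (le_trans hu.1 huu')
  have hzz' : sSup (Zset f ∩ Set.Icc 0 u) ≤ sSup (Zset f ∩ Set.Icc 0 u') :=
    le_csSup (hbdd u') ⟨hz.1, hz.2.1, le_trans hz.2.2 huu'⟩
  rcases le_or_gt (sSup (Zset f ∩ Set.Icc 0 u')) u with hle | hlt
  · have : sSup (Zset f ∩ Set.Icc 0 u') ≤ sSup (Zset f ∩ Set.Icc 0 u) :=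
      le_csSup (hbdd u) ⟨hz'.1, hz'.2.1, hle⟩
    have heq : sSup (Zset f ∩ Set.Icc 0 u) = sSup (Zset f ∩ Set.Icc 0 u') :=
      le_antisymm hzz' this
    rw [heq]
    exact ER_refl (axis_mem_cantor (hH _) hz'.1.2)
  · -- u < z' ≤ u'
    have hc := sInf_ZIcc_mem hf h1 hu.2
    have hcz' : sInf (Zset f ∩ Set.Icc u 1) ≤ sSup (Zset f ∩ Set.Icc 0 u') :=
      csInf_le (hbddB u) ⟨hz'.1, le_of_lt hlt, hz'.1.1.2⟩
    have hzc : sSup (Zset f ∩ Set.Icc 0 u) ≤ sInf (Zset f ∩ Set.Icc u 1) :=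
      le_trans hz.2.2 hc.2.1
    -- window from c to z'
    have hwin : ER ((f (sInf (Zset f ∩ Set.Icc u 1))).1)
        ((f (sSup (Zset f ∩ Set.Icc 0 u'))).1) := by
      apply window_ER hf hH hc.1 hz'.1 hcz'
      intro s hs s' hs'
      apply hunif s hs.1.1 s' hs'.1.1
      have hb1 : s ∈ Set.Icc (sInf (Zset f ∩ Set.Icc u 1)) (sSup (Zset f ∩ Set.Icc 0 u')) := hs.2
      have hb2 : s' ∈ Set.Icc (sInf (Zset f ∩ Set.Icc u 1)) (sSup (Zset f ∩ Set.Icc 0 u')) := hs'.2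
      have hq1 : u ≤ sInf (Zset f ∩ Set.Icc u 1) := hc.2.1
      have hq2 : sSup (Zset f ∩ Set.Icc 0 u') ≤ u' := hz'.2.2
      rw [abs_lt]
      constructor <;>
        [linarith [hb1.1, hb1.2, hb2.1, hb2.2]; linarith [hb1.1, hb1.2, hb2.1, hb2.2]]
    rcases eq_or_lt_of_le hzc with heq | hltzc
    · rw [heq]
      exact hwin
    · -- gap from z to c
      have hgap : ∀ w ∈ Set.Ioo (sSup (Zset f ∩ Set.Icc 0 u)) (sInf (Zset f ∩ Set.Icc u 1)),
          w ∉ Zset f := by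
        intro w hw hwZ
        rcases le_or_gt w u with hwu | hwu
        · have : w ≤ sSup (Zset f ∩ Set.Icc 0 u) :=
            le_csSup (hbdd u) ⟨hwZ, le_trans hz.2.1 (le_of_lt hw.1), hwu⟩
          linarith [hw.1]
        · have : sInf (Zset f ∩ Set.Icc u 1) ≤ w :=
            csInf_le (hbddB u) ⟨hwZ, le_of_lt hwu, le_trans (le_of_lt hw.2) hc.2.2⟩
          linarith [hw.2]
      exact ER_trans (gap_ER hf hH hltzc hz.1 hc.1 hgap) hwin

lemma main_chain {f : ℝ → ℝ × ℝ} (hf : Continuous f) (hH : ∀ u, f u ∈ knasterH)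
    (h0 : (0:ℝ) ∈ Zset f) (h1 : (1:ℝ) ∈ Zset f) :
    ER ((f 0).1) ((f 1).1) := by
  -- uniform continuity on [0,1]
  have hucont := isCompact_Icc.uniformContinuousOn_of_continuous
    (f := f) (s := Set.Icc (0:ℝ) 1) hf.continuousOn
  rw [Metric.uniformContinuousOn_iff] at hucont
  obtain ⟨δ, hδ, hδp⟩ := hucont (1/3) (by norm_num)
  have hunif : ∀ s ∈ Set.Icc (0:ℝ) 1, ∀ s' ∈ Set.Icc (0:ℝ) 1,
      |s - s'| < δ → |(f s).1 - (f s').1| < 1/3 := by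
    intro s hs s' hs' hss
    have := hδp s hs s' hs' (by rwa [Real.dist_eq])
    calc |(f s).1 - (f s').1| = dist (f s).1 (f s').1 := (Real.dist_eq _ _).symm
      _ ≤ dist (f s) (f s') := by
          rw [Prod.dist_eq]
          exact le_max_left _ _
      _ < 1/3 := this
  -- grid
  obtain ⟨N, hN⟩ := exists_nat_gt (2/δ)
  have hNp : (0:ℝ) < δ/2 := by linarith
  have hgrid : ∀ i : ℕ, ER ((f 0).1) ((f (sSup (Zset f ∩ Set.Icc 0 (min (i * (δ/2)) 1)))).1) := by
    intro i
    induction i with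
    | zero =>
      have he : min ((0:ℕ) * (δ/2)) 1 = (0:ℝ) := by norm_num
      rw [he]
      have hsup : sSup (Zset f ∩ Set.Icc 0 (0:ℝ)) = 0 := by
        apply le_antisymm
        · exact csSup_le ⟨0, h0, le_refl _, le_refl _⟩ (fun z hz => hz.2.2)
        · exact le_csSup (BddAbove.mono Set.inter_subset_right bddAbove_Icc)
            ⟨h0, le_refl _, le_refl _⟩
      rw [hsup]
      exact ER_refl (axis_mem_cantor (hH 0) h0.2)
    | succ i ih =>
      apply ER_trans ih
      apply chain_step hf hH h0 h1 hδ hunif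
      · constructor
        · positivity
        · exact min_le_right _ _
      · constructor
        · positivity
        · exact min_le_right _ _
      · apply min_le_min _ (le_refl 1)
        have : (i:ℝ) ≤ (i:ℕ)+1 := by push_cast; linarith
        push_cast
        nlinarith
      · -- difference < δ
        have hstep : min (((i:ℕ)+1 : ℝ) * (δ/2)) 1 - min ((i:ℝ) * (δ/2)) 1 ≤ δ/2 := by
          rcases le_total (((i:ℕ)+1 : ℝ) * (δ/2)) 1 with hc | hc
          · rw [min_eq_left hc, min_eq_left (by nlinarith : (i:ℝ) * (δ/2) ≤ 1)]
            ring_nf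
            linarith
          · rw [min_eq_right hc]
            rcases le_total ((i:ℝ) * (δ/2)) 1 with hc2 | hc2
            · rw [min_eq_left hc2]
              nlinarith
            · rw [min_eq_right hc2]
              linarith
        push_cast at hstep ⊢
        linarith
  have hfin := hgrid N
  have hge : (1:ℝ) ≤ N * (δ/2) := by
    rw [div_lt_iff₀ hδ] at hN
    nlinarith
  have he : min ((N:ℝ) * (δ/2)) 1 = 1 := min_eq_right hge
  rw [he] at hfin
  have hsup : sSup (Zset f ∩ Set.Icc 0 (1:ℝ)) = 1 := by
    apply le_antisymm
    · exact csSup_le ⟨1, h1, zero_le_one, le_refl _⟩ (fun z hz => hz.2.2)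
    · exact le_csSup (BddAbove.mono Set.inter_subset_right bddAbove_Icc)
        ⟨h1, zero_le_one, le_refl _⟩
  rwa [hsup] at hfin

/-- If `α` and `β` are not `E₀*`-equivalent then `ψ α` and `ψ β` are not
joined by any path inside the Knaster continuum `H`. -/
theorem psi_not_joinedIn_of_not_E0star :
    ∀ α β : Cantor, ¬ E0star α β → ¬ JoinedIn knasterH (psi α) (psi β) := by
  intro α β hne hjoin
  obtain ⟨γ, hγ⟩ := hjoin
  set f : ℝ → ℝ × ℝ := fun u => γ (Set.projIcc 0 1 zero_le_one u) with hfdef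
  have hf : Continuous f := γ.continuous.comp continuous_projIcc
  have hH : ∀ u, f u ∈ knasterH := fun u => hγ _
  have hf0 : f 0 = psi α := by
    rw [hfdef]
    simp only
    rw [Set.projIcc_left]
    exact γ.source
  have hf1 : f 1 = psi β := by
    rw [hfdef]
    simp only
    rw [Set.projIcc_right]
    exact γ.target
  have h0Z : (0:ℝ) ∈ Zset f := ⟨⟨le_refl _, zero_le_one⟩, by rw [Set.mem_setOf_eq, hf0]; rfl⟩
  have h1Z : (1:ℝ) ∈ Zset f := ⟨⟨zero_le_one, le_refl _⟩, by rw [Set.mem_setOf_eq, hf1]; rfl⟩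
  have hER := main_chain hf hH h0Z h1Z
  rw [hf0, hf1] at hER
  obtain ⟨a, b, ha, hb, hab⟩ := hER
  have ha' : a = α := psiR_injective (by rw [ha]; rfl)
  have hb' : b = β := psiR_injective (by rw [hb]; rfl)
  subst ha'
  subst hb'
  exact hne hab
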